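/- Assume Conditions 1 and 2 hold in every model of the sequence indexed by m. Then for any choice of minimizers (a*_m, B*_m) ∈ 𝓘_m, limsup_{m→∞} [ (1/m)·MSE_0^{(m)}(a*_m, B*_m) − (1/m)·Σ_{j=1}^m 𝔼 e_{t,j}² ] ≤ 0; i.e., (1/m)MSE_0^{(m)}(a*_m,B*_m) ≤ (1/m)Σ_{j=1}^m 𝔼 e_{t,j}² + o(1) as m → ∞. -/

import Mathlib

open MeasureTheory Filter Matrix

noncomputable section

namespace ODPCDFM

/-- Frobenius norm of a real matrix. -/
def frob {ι κ : Type*} [Fintype ι] [Fintype κ] (M : Matrix ι κ ℝ) : ℝ :=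
  Real.sqrt (∑ i, ∑ j, (M i j) ^ 2)

/-- Smallest eigenvalue of a symmetric real matrix, via the Rayleigh quotient. -/
def lambdaMin {n : ℕ} (M : Matrix (Fin n) (Fin n) ℝ) : ℝ :=
  ⨅ x : { x : EuclideanSpace ℝ (Fin n) // ‖x‖ = 1 }, ∑ i, ∑ j, x.1 i * M i j * x.1 j

/-- Largest eigenvalue of a symmetric real matrix, via the Rayleigh quotient. -/
def lambdaMax {n : ℕ} (M : Matrix (Fin n) (Fin n) ℝ) : ℝ :=
  ⨆ x : { x : EuclideanSpace ℝ (Fin n) // ‖x‖ = 1 }, ∑ i, ∑ j, x.1 i * M i j * x.1 j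

variable (k₁ k₂ : ℕ)

section PerModel

variable {Ω' : Type*} [MeasurableSpace Ω'] (m : ℕ)

/-- The common part `χ_t = B'𝐟_t` of the dynamic factor model, where the stacked
factor vector at time `t` is `𝐟_t = (f_t, …, f_{t-k₂})'` and the scalar factor
process is realized as `f_u = F ∘ τ^{u}`, time-shifted by `k₂` so that all the
needed lags of the factor are available at nonnegative times. -/
def commonPart (τ : Ω' → Ω') (F : Ω' → ℝ) (B : Matrix (Fin (k₂ + 1)) (Fin m) ℝ)
    (t : ℕ) (ω : Ω') : EuclideanSpace ℝ (Fin m) :=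
  (WithLp.equiv 2 (Fin m → ℝ)).symm fun j =>
    ∑ h : Fin (k₂ + 1), B h j * F (τ^[t + k₂ - h.1] ω)

/-- The observed process `z_t = B'𝐟_t + e_t`, with idiosyncratic process
`e_t = E ∘ τ^t`. -/
def zdfm (τ : Ω' → Ω') (F : Ω' → ℝ) (B : Matrix (Fin (k₂ + 1)) (Fin m) ℝ)
    (E : Ω' → EuclideanSpace ℝ (Fin m)) (t : ℕ) (ω : Ω') : EuclideanSpace ℝ (Fin m) :=
  (WithLp.equiv 2 (Fin m → ℝ)).symm fun j =>
    commonPart k₂ m τ F B t ω j + E (τ^[t] ω) j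

/-- The one-sided dynamic principal component `f_t(a) = a'x_t` of a process `z`,
where `x_t = (z_t', …, z_{t-k₁}')`. -/
def comp (z : ℕ → Ω' → EuclideanSpace ℝ (Fin m))
    (a : EuclideanSpace ℝ (Fin (k₁ + 1) × Fin m)) (t : ℕ) (ω : Ω') : ℝ :=
  ∑ h : Fin (k₁ + 1), ∑ j : Fin m, a (h, j) * z (t - h.1) ω j

/-- Reconstruction `z_t^R(a,B)` (no intercept). -/
def recon (z : ℕ → Ω' → EuclideanSpace ℝ (Fin m))
    (a : EuclideanSpace ℝ (Fin (k₁ + 1) × Fin m))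
    (Bc : Matrix (Fin (k₂ + 1)) (Fin m) ℝ) (t : ℕ) (ω : Ω') :
    EuclideanSpace ℝ (Fin m) :=
  (WithLp.equiv 2 (Fin m → ℝ)).symm fun j =>
    ∑ h : Fin (k₂ + 1), Bc h j * comp k₁ m z a (t - h.1) ω

/-- Population mean squared reconstruction error `MSE₀^{(m)}(a,B)`. -/
def MSE₀ (μ : Measure Ω') (z : ℕ → Ω' → EuclideanSpace ℝ (Fin m))
    (a : EuclideanSpace ℝ (Fin (k₁ + 1) × Fin m))
    (Bc : Matrix (Fin (k₂ + 1)) (Fin m) ℝ) : ℝ :=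
  ∫ ω, ‖z (k₁ + k₂) ω - recon k₁ k₂ m z a Bc (k₁ + k₂) ω‖ ^ 2 ∂μ

/-- Condition 1 for the process `z`. -/
def Condition1 (μ : Measure Ω') (z : ℕ → Ω' → EuclideanSpace ℝ (Fin m)) : Prop :=
  ∃ η : ℝ, η < 1 ∧
    ∀ a : EuclideanSpace ℝ (Fin (k₁ + 1) × Fin m), ‖a‖ = 1 →
      ∀ v : Fin (k₂ + 2) → ℝ, v ≠ 0 →
        (μ {ω | ∑ h : Fin (k₂ + 1),
            v h.castSucc * comp k₁ m z a (k₁ + k₂ - h.1) ω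
              = v (Fin.last (k₂ + 1))}).toReal ≤ η

/-- The set `𝓘_m` of minimizers of the population MSE. -/
def minimizers (μ : Measure Ω') (z : ℕ → Ω' → EuclideanSpace ℝ (Fin m)) :
    Set ((EuclideanSpace ℝ (Fin (k₁ + 1) × Fin m)) × Matrix (Fin (k₂ + 1)) (Fin m) ℝ) :=
  {p | ‖p.1‖ = 1 ∧ ∀ a Bc, ‖a‖ = 1 →
    MSE₀ k₁ k₂ m μ z p.1 p.2 ≤ MSE₀ k₁ k₂ m μ z a Bc}

/-- Lag-0 covariance matrix `Σᵉ(0)` of the (zero-mean) idiosyncratic part. -/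
def Sige (μ : Measure Ω') (E : Ω' → EuclideanSpace ℝ (Fin m)) :
    Matrix (Fin m) (Fin m) ℝ :=
  Matrix.of fun i j => ∫ ω, E ω i * E ω j ∂μ

end PerModel

/- ===== auxiliary lemmas ===== -/

lemma sq_norm_eucl {ι : Type*} [Fintype ι] (x : EuclideanSpace ℝ ι) :
    ‖x‖ ^ 2 = ∑ i, x i ^ 2 := by
  rw [EuclideanSpace.norm_eq, Real.sq_sqrt (by positivity)]
  simp [Real.norm_eq_abs, sq_abs]

lemma abs_coord_le {ι : Type*} [Fintype ι] (x : EuclideanSpace ℝ ι) (i : ι) :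
    |x i| ≤ ‖x‖ := by
  have h1 : (x i) ^ 2 ≤ ‖x‖ ^ 2 := by
    rw [sq_norm_eucl]
    exact Finset.single_le_sum (f := fun i => x i ^ 2) (fun j _ => sq_nonneg _)
      (Finset.mem_univ i)
  exact abs_le_of_sq_le_sq h1 (norm_nonneg _)

lemma quad_bddAbove {n : ℕ} (M : Matrix (Fin n) (Fin n) ℝ) :
    BddAbove (Set.range fun x : { x : EuclideanSpace ℝ (Fin n) // ‖x‖ = 1 } =>
      ∑ i, ∑ j, x.1 i * M i j * x.1 j) := by
  refine ⟨∑ i, ∑ j, |M i j|, ?_⟩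
  rintro r ⟨x, rfl⟩
  calc ∑ i, ∑ j, x.1 i * M i j * x.1 j ≤ ∑ i, ∑ j, |M i j| := by
        refine Finset.sum_le_sum fun i _ => Finset.sum_le_sum fun j _ => ?_
        calc x.1 i * M i j * x.1 j ≤ |x.1 i * M i j * x.1 j| := le_abs_self _
          _ = |x.1 i| * |M i j| * |x.1 j| := by rw [abs_mul, abs_mul]
          _ ≤ 1 * |M i j| * 1 := by
              have h1 := (abs_coord_le x.1 i).trans_eq x.2
              have h2 := (abs_coord_le x.1 j).trans_eq x.2
              gcongr <;> positivity
          _ = |M i j| := by ring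

lemma quad_le_lambdaMax {n : ℕ} (M : Matrix (Fin n) (Fin n) ℝ) (v : Fin n → ℝ) :
    ∑ i, ∑ j, v i * M i j * v j ≤ lambdaMax M * ∑ i, v i ^ 2 := by
  rcases eq_or_ne (∑ i, v i ^ 2) 0 with hs | hs
  · have hv : ∀ i, v i = 0 := by
      intro i
      have := (Finset.sum_eq_zero_iff_of_nonneg (fun j _ => sq_nonneg (v j))).1 hs i
        (Finset.mem_univ i)
      exact pow_eq_zero_iff (n := 2) (by norm_num) |>.1 this
    simp [hv]
  · have hpos : 0 < ∑ i, v i ^ 2 :=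
      lt_of_le_of_ne (Finset.sum_nonneg fun i _ => sq_nonneg _) (Ne.symm hs)
    set c : ℝ := Real.sqrt (∑ i, v i ^ 2) with hc
    have hc0 : 0 < c := Real.sqrt_pos.2 hpos
    have hc2 : c ^ 2 = ∑ i, v i ^ 2 := Real.sq_sqrt hpos.le
    set x : EuclideanSpace ℝ (Fin n) := (WithLp.equiv 2 _).symm (fun i => v i / c) with hx
    have hxi : ∀ i, x i = v i / c := fun i => rfl
    have hxnorm : ‖x‖ = 1 := by
      have h2 : ‖x‖ ^ 2 = 1 := by
        rw [sq_norm_eucl]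
        simp only [hxi, div_pow]
        rw [← Finset.sum_div, ← hc2, div_self (by positivity)]
      rw [← Real.sqrt_sq (norm_nonneg x), h2, Real.sqrt_one]
    have hle : ∑ i, ∑ j, x i * M i j * x j ≤ lambdaMax M :=
      le_ciSup (quad_bddAbove M) ⟨x, hxnorm⟩
    have hquad : ∑ i, ∑ j, x i * M i j * x j = (∑ i, ∑ j, v i * M i j * v j) / c ^ 2 := by
      simp only [hxi]
      rw [Finset.sum_div]
      refine Finset.sum_congr rfl fun i _ => ?_
      rw [Finset.sum_div]
      refine Finset.sum_congr rfl fun j _ => ?_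
      field_simp
    rw [hquad] at hle
    rw [div_le_iff₀ (by positivity)] at hle
    calc ∑ i, ∑ j, v i * M i j * v j ≤ lambdaMax M * c ^ 2 := hle
      _ = lambdaMax M * ∑ i, v i ^ 2 := by rw [hc2]

lemma young_sq (ε x y : ℝ) (hε : 0 < ε) :
    (x - y) ^ 2 ≤ (1 + ε) * x ^ 2 + (1 + ε⁻¹) * y ^ 2 := by
  have h := sq_nonneg (ε * x + y)
  have key : ε * x ^ 2 + ε⁻¹ * y ^ 2 + 2 * x * y ≥ 0 := by
    have := mul_nonneg h (le_of_lt (inv_pos.2 hε))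
    have e : (ε * x + y) ^ 2 * ε⁻¹ = ε * x ^ 2 + ε⁻¹ * y ^ 2 + 2 * x * y := by
      field_simp; ring
    linarith [e ▸ this]
  nlinarith [key]

section ModelAux

variable {Ω' : Type*} [MeasurableSpace Ω'] {μ : Measure Ω'}

lemma memL2_coord {m : ℕ} {E : Ω' → EuclideanSpace ℝ (Fin m)} (hE : MemLp E 2 μ) (j : Fin m) :
    MemLp (fun ω => E ω j) 2 μ := by
  have := (EuclideanSpace.proj (𝕜 := ℝ) j).comp_memLp' hE
  exact this

lemma integrable_mul_L2 {f g : Ω' → ℝ} (hf : MemLp f 2 μ) (hg : MemLp g 2 μ) :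
    Integrable (fun ω => f ω * g ω) μ := by
  have h1 := ((hf.add hg).integrable_sq.sub hf.integrable_sq).sub hg.integrable_sq
  have h1' : Integrable (fun ω => 2 * (f ω * g ω)) μ := by
    refine h1.congr (Filter.Eventually.of_forall fun ω => ?_)
    simp [Pi.sub_apply, Pi.add_apply]; ring
  have := h1'.const_mul (2 : ℝ)⁻¹
  refine this.congr (Filter.Eventually.of_forall fun ω => ?_)
  ring

lemma shift_integral {T : Ω' → Ω'} (hT : MeasurePreserving T μ μ) {g : Ω' → ℝ}
    (hg : AEStronglyMeasurable g μ) : ∫ ω, g (T ω) ∂μ = ∫ ω, g ω ∂μ := by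
  conv_rhs => rw [← hT.map_eq]
  exact (integral_map hT.aemeasurable (hT.map_eq.symm ▸ hg)).symm

end ModelAux

section ModelMain

variable {Ω' : Type*} [MeasurableSpace Ω']

lemma model_bound (k₁ k₂ m : ℕ) (μ : Measure Ω') [IsProbabilityMeasure μ]
    (τ : Ω' → Ω') (hτ : MeasurePreserving τ μ μ) (F : Ω' → ℝ)
    (B : Matrix (Fin (k₂ + 1)) (Fin m) ℝ)
    (E : Ω' → EuclideanSpace ℝ (Fin m)) (hE : MemLp E 2 μ)
    (C : ℝ) (hC : lambdaMax (Sige m μ E) ≤ C)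
    (w : Fin m → ℝ)
    (hw : B.mulVec w = fun h => if h = (0 : Fin (k₂ + 1)) then 1 else 0)
    (astar : EuclideanSpace ℝ (Fin (k₁ + 1) × Fin m))
    (Bstar : Matrix (Fin (k₂ + 1)) (Fin m) ℝ)
    (hstar : (astar, Bstar) ∈ minimizers k₁ k₂ m μ (zdfm k₂ m τ F B E))
    (ε : ℝ) (hε : 0 < ε) :
    MSE₀ k₁ k₂ m μ (zdfm k₂ m τ F B E) astar Bstar ≤
      (1 + ε) * (∑ j, ∫ ω, (E ω j) ^ 2 ∂μ) +
      (1 + ε⁻¹) * (((k₂ : ℝ) + 1) * (∑ h, ∑ j, (B h j) ^ 2) * (C * ∑ i, (w i) ^ 2)) := by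
  set z := zdfm k₂ m τ F B E with hz
  have hw0 : (∑ j, B 0 j * w j) = 1 := by
    have := congrFun hw 0
    simpa [Matrix.mulVec, dotProduct] using this
  have hsw : 0 < ∑ i, w i ^ 2 := by
    rcases lt_or_eq_of_le (Finset.sum_nonneg fun i (_ : i ∈ Finset.univ) => sq_nonneg (w i))
      with h | h
    · exact h
    · exfalso
      have hv : ∀ i, w i = 0 := fun i =>
        pow_eq_zero_iff (n := 2) (by norm_num) |>.1
          ((Finset.sum_eq_zero_iff_of_nonneg (fun j _ => sq_nonneg (w j))).1 h.symm i
            (Finset.mem_univ i))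
      simp [hv] at hw0
  set nW := Real.sqrt (∑ i, w i ^ 2) with hnWdef
  have hnW0 : 0 < nW := Real.sqrt_pos.2 hsw
  have hnW2 : nW ^ 2 = ∑ i, w i ^ 2 := Real.sq_sqrt hsw.le
  set a : EuclideanSpace ℝ (Fin (k₁ + 1) × Fin m) :=
    (WithLp.equiv 2 _).symm
      (fun p => if p.1 = (0 : Fin (k₁ + 1)) then w p.2 / nW else 0) with ha
  have hap : ∀ p : Fin (k₁ + 1) × Fin m,
      a p = if p.1 = 0 then w p.2 / nW else 0 := fun p => rfl
  have hanorm : ‖a‖ = 1 := by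
    have h2 : ‖a‖ ^ 2 = 1 := by
      rw [sq_norm_eucl, Fintype.sum_prod_type]
      have hrow : ∀ h : Fin (k₁ + 1),
          (∑ j, a (h, j) ^ 2) = if h = 0 then (∑ j, w j ^ 2) / nW ^ 2 else 0 := by
        intro h
        by_cases hh : h = 0
        · subst hh
          simp only [hap, if_pos rfl]
          simp [div_pow, ← Finset.sum_div]
        · simp [hap, hh]
      rw [Finset.sum_congr rfl fun h _ => hrow h]
      rw [Finset.sum_ite_eq' Finset.univ (0 : Fin (k₁ + 1))]
      simp [hnW2, ne_of_gt hsw]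
    rw [← Real.sqrt_sq (norm_nonneg a), h2, Real.sqrt_one]
  set Bc : Matrix (Fin (k₂ + 1)) (Fin m) ℝ := Matrix.of (fun h j => nW * B h j) with hBc
  set t := k₁ + k₂ with ht
  set Y : Ω' → ℝ := fun ω => ∑ i, w i * E ω i with hYdef
  have hzj : ∀ (s : ℕ) ω (j : Fin m), z s ω j =
      (∑ h' : Fin (k₂ + 1), B h' j * F (τ^[s + k₂ - h'.1] ω)) + E (τ^[s] ω) j :=
    fun s ω j => rfl
  have hcomp : ∀ (s : ℕ) ω, comp k₁ m z a s ω = (F (τ^[s + k₂] ω) + Y (τ^[s] ω)) / nW := by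
    intro s ω
    show (∑ h : Fin (k₁ + 1), ∑ j, a (h, j) * z (s - h.1) ω j) = _
    rw [Finset.sum_eq_single (0 : Fin (k₁ + 1))]
    rotate_left
    · intro h _ hh
      simp [hap, hh]
    · intro habs; exact absurd (Finset.mem_univ _) habs
    have expand : ∀ j : Fin m, a ((0 : Fin (k₁ + 1)), j) * z (s - ((0 : Fin (k₁ + 1)) : ℕ)) ω j =
        (w j * ((∑ h' : Fin (k₂ + 1), B h' j * F (τ^[s + k₂ - h'.1] ω)) + E (τ^[s] ω) j)) / nW := by
      intro j
      rw [hap]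
      simp only [Fin.val_zero, Nat.sub_zero, eq_self_iff_true, if_true]
      rw [hzj]
      ring
    rw [Finset.sum_congr rfl fun j _ => expand j, ← Finset.sum_div]
    congr 1
    have step : ∀ j : Fin m,
        w j * ((∑ h' : Fin (k₂ + 1), B h' j * F (τ^[s + k₂ - h'.1] ω)) + E (τ^[s] ω) j)
        = (∑ h' : Fin (k₂ + 1), B h' j * w j * F (τ^[s + k₂ - h'.1] ω)) + w j * E (τ^[s] ω) j := by
      intro j
      rw [mul_add, Finset.mul_sum]
      congr 1
      exact Finset.sum_congr rfl fun h' _ => by ring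
    rw [Finset.sum_congr rfl fun j _ => step j, Finset.sum_add_distrib]
    congr 1
    rw [Finset.sum_comm]
    have hrow : ∀ h' : Fin (k₂ + 1),
        (∑ j, B h' j * w j * F (τ^[s + k₂ - h'.1] ω))
          = (if h' = 0 then (1 : ℝ) else 0) * F (τ^[s + k₂ - h'.1] ω) := by
      intro h'
      rw [← Finset.sum_mul]
      congr 1
      have := congrFun hw h'
      simpa [Matrix.mulVec, dotProduct] using this
    rw [Finset.sum_congr rfl fun h' _ => hrow h']
    simp [ite_mul, Finset.sum_ite_eq' Finset.univ (0 : Fin (k₂ + 1))]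
  have hrecon : ∀ ω (j : Fin m), recon k₁ k₂ m z a Bc t ω j
      = ∑ h : Fin (k₂ + 1), B h j * (F (τ^[t - h.1 + k₂] ω) + Y (τ^[t - h.1] ω)) := by
    intro ω j
    show (∑ h : Fin (k₂ + 1), Bc h j * comp k₁ m z a (t - h.1) ω) = _
    refine Finset.sum_congr rfl fun h _ => ?_
    rw [hcomp]
    show nW * B h j * ((F (τ^[t - h.1 + k₂] ω) + Y (τ^[t - h.1] ω)) / nW) = _
    field_simp
  have hdiff : ∀ ω (j : Fin m), (z t ω - recon k₁ k₂ m z a Bc t ω) j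
      = E (τ^[t] ω) j - ∑ h : Fin (k₂ + 1), B h j * Y (τ^[t - h.1] ω) := by
    intro ω j
    rw [PiLp.sub_apply, hrecon, hzj]
    have hidx : ∀ h : Fin (k₂ + 1), t + k₂ - h.1 = t - h.1 + k₂ := by
      intro h; have := h.isLt; omega
    rw [Finset.sum_congr rfl (fun h (_ : h ∈ Finset.univ) => by rw [hidx h]),
      Finset.sum_congr rfl (fun h (_ : h ∈ Finset.univ) => mul_add (B h j)
        (F (τ^[t - h.1 + k₂] ω)) (Y (τ^[t - h.1] ω))), Finset.sum_add_distrib]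
    ring
  have hMSE : MSE₀ k₁ k₂ m μ z a Bc
      = ∫ ω, ∑ j, (E (τ^[t] ω) j - ∑ h : Fin (k₂ + 1), B h j * Y (τ^[t - h.1] ω)) ^ 2 ∂μ := by
    show (∫ ω, ‖z (k₁ + k₂) ω - recon k₁ k₂ m z a Bc (k₁ + k₂) ω‖ ^ 2 ∂μ) = _
    refine integral_congr_ae (Filter.Eventually.of_forall fun ω => ?_)
    show ‖z t ω - recon k₁ k₂ m z a Bc t ω‖ ^ 2 = _
    rw [sq_norm_eucl]
    exact Finset.sum_congr rfl fun j _ => by rw [hdiff ω j]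
  have hEj : ∀ j, MemLp (fun ω => E ω j) 2 μ := memL2_coord hE
  have hYL2 : MemLp Y 2 μ :=
    memLp_finset_sum _ fun i _ => (hEj i).const_mul (w i)
  have hshift : ∀ s : ℕ, MeasurePreserving (τ^[s]) μ μ := fun s => hτ.iterate s
  have hEjs : ∀ (s : ℕ) (j : Fin m), MemLp (fun ω => E (τ^[s] ω) j) 2 μ :=
    fun s j => (hEj j).comp_measurePreserving (hshift s)
  have hYs : ∀ s : ℕ, MemLp (fun ω => Y (τ^[s] ω)) 2 μ :=
    fun s => hYL2.comp_measurePreserving (hshift s)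
  have hG1 : Integrable (fun ω => ∑ j, (E (τ^[t] ω) j) ^ 2) μ :=
    integrable_finset_sum _ fun j _ => (hEjs t j).integrable_sq
  have hG2 : Integrable
      (fun ω => ∑ j, ∑ h : Fin (k₂ + 1), (B h j) ^ 2 * (Y (τ^[t - h.1] ω)) ^ 2) μ :=
    integrable_finset_sum _ fun j _ => integrable_finset_sum _ fun h _ =>
      ((hYs (t - h.1)).integrable_sq).const_mul _
  have hmin : MSE₀ k₁ k₂ m μ z astar Bstar ≤ MSE₀ k₁ k₂ m μ z a Bc := hstar.2 a Bc hanorm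
  have hbound : MSE₀ k₁ k₂ m μ z a Bc ≤
      ∫ ω, ((1 + ε) * ∑ j, (E (τ^[t] ω) j) ^ 2
        + (1 + ε⁻¹) * (((k₂ : ℝ) + 1) *
          ∑ j, ∑ h : Fin (k₂ + 1), (B h j) ^ 2 * (Y (τ^[t - h.1] ω)) ^ 2)) ∂μ := by
    rw [hMSE]
    refine integral_mono_of_nonneg
      (Filter.Eventually.of_forall fun ω => Finset.sum_nonneg fun j _ => sq_nonneg _)
      ((hG1.const_mul _).add ((hG2.const_mul _).const_mul _))
      (Filter.Eventually.of_forall fun ω => ?_)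
    calc ∑ j, (E (τ^[t] ω) j - ∑ h : Fin (k₂ + 1), B h j * Y (τ^[t - h.1] ω)) ^ 2
        ≤ ∑ j, ((1 + ε) * (E (τ^[t] ω) j) ^ 2
            + (1 + ε⁻¹) * (∑ h : Fin (k₂ + 1), B h j * Y (τ^[t - h.1] ω)) ^ 2) :=
          Finset.sum_le_sum fun j _ => young_sq ε _ _ hε
      _ = (1 + ε) * ∑ j, (E (τ^[t] ω) j) ^ 2
            + (1 + ε⁻¹) * ∑ j, (∑ h : Fin (k₂ + 1), B h j * Y (τ^[t - h.1] ω)) ^ 2 := by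
          rw [Finset.sum_add_distrib, ← Finset.mul_sum, ← Finset.mul_sum]
      _ ≤ _ := by
          have hin : (∑ j, (∑ h : Fin (k₂ + 1), B h j * Y (τ^[t - h.1] ω)) ^ 2)
              ≤ ((k₂ : ℝ) + 1) *
                ∑ j, ∑ h : Fin (k₂ + 1), (B h j) ^ 2 * (Y (τ^[t - h.1] ω)) ^ 2 := by
            rw [Finset.mul_sum]
            refine Finset.sum_le_sum fun j _ => ?_
            have hcs := sq_sum_le_card_mul_sum_sq (s := (Finset.univ : Finset (Fin (k₂ + 1))))
              (f := fun h : Fin (k₂ + 1) => B h j * Y (τ^[t - h.1] ω))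
            have hcard : ((Finset.univ : Finset (Fin (k₂ + 1))).card : ℝ) = (k₂ : ℝ) + 1 := by
              simp [Finset.card_univ]
            calc (∑ h : Fin (k₂ + 1), B h j * Y (τ^[t - h.1] ω)) ^ 2
                ≤ ((Finset.univ : Finset (Fin (k₂ + 1))).card : ℝ) *
                  ∑ h : Fin (k₂ + 1), (B h j * Y (τ^[t - h.1] ω)) ^ 2 := by
                  exact_mod_cast hcs
              _ = ((k₂ : ℝ) + 1) * ∑ h : Fin (k₂ + 1), (B h j) ^ 2 * (Y (τ^[t - h.1] ω)) ^ 2 := by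
                  rw [hcard]
                  congr 1
                  exact Finset.sum_congr rfl fun h _ => by rw [mul_pow]
          have h1 : (0 : ℝ) ≤ 1 + ε⁻¹ := by positivity
          have := mul_le_mul_of_nonneg_left hin h1
          linarith
  have hEsq_shift : ∀ j : Fin m,
      (∫ ω, (E (τ^[t] ω) j) ^ 2 ∂μ) = ∫ ω, (E ω j) ^ 2 ∂μ :=
    fun j => shift_integral (hshift t) ((hEj j).integrable_sq).aestronglyMeasurable
  have hYsq_shift : ∀ s : ℕ, (∫ ω, (Y (τ^[s] ω)) ^ 2 ∂μ) = ∫ ω, (Y ω) ^ 2 ∂μ :=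
    fun s => shift_integral (hshift s) (hYL2.integrable_sq).aestronglyMeasurable
  have hYquad : (∫ ω, (Y ω) ^ 2 ∂μ) ≤ C * ∑ i, w i ^ 2 := by
    have hint : ∀ (i i' : Fin m),
        Integrable (fun ω => (w i * E ω i) * (w i' * E ω i')) μ :=
      fun i i' => integrable_mul_L2 ((hEj i).const_mul (w i)) ((hEj i').const_mul (w i'))
    have hYsq : (∫ ω, (Y ω) ^ 2 ∂μ)
        = ∑ i, ∑ i', w i * (Sige m μ E) i i' * w i' := by
      have expand : ∀ ω, (Y ω) ^ 2 = ∑ i, ∑ i', (w i * E ω i) * (w i' * E ω i') := by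
        intro ω
        rw [sq, Finset.sum_mul_sum]
      rw [integral_congr_ae (Filter.Eventually.of_forall expand)]
      rw [integral_finset_sum _ fun i _ => integrable_finset_sum _ fun i' _ => hint i i']
      refine Finset.sum_congr rfl fun i _ => ?_
      rw [integral_finset_sum _ fun i' _ => hint i i']
      refine Finset.sum_congr rfl fun i' _ => ?_
      have hre : ∀ ω, (w i * E ω i) * (w i' * E ω i') = (w i * w i') * (E ω i * E ω i') :=
        fun ω => by ring
      rw [integral_congr_ae (Filter.Eventually.of_forall hre), integral_const_mul]
      show w i * w i' * ∫ ω, E ω i * E ω i' ∂μ = w i * (∫ ω, E ω i * E ω i' ∂μ) * w i'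
      ring
    rw [hYsq]
    calc (∑ i, ∑ i', w i * (Sige m μ E) i i' * w i')
        ≤ lambdaMax (Sige m μ E) * ∑ i, w i ^ 2 := quad_le_lambdaMax _ w
      _ ≤ C * ∑ i, w i ^ 2 :=
          mul_le_mul_of_nonneg_right hC (Finset.sum_nonneg fun i _ => sq_nonneg _)
  have hrhs : (∫ ω, ((1 + ε) * ∑ j, (E (τ^[t] ω) j) ^ 2
        + (1 + ε⁻¹) * (((k₂ : ℝ) + 1) *
          ∑ j, ∑ h : Fin (k₂ + 1), (B h j) ^ 2 * (Y (τ^[t - h.1] ω)) ^ 2)) ∂μ)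
      = (1 + ε) * (∑ j, ∫ ω, (E ω j) ^ 2 ∂μ)
        + (1 + ε⁻¹) * (((k₂ : ℝ) + 1) *
          ∑ j, ∑ h : Fin (k₂ + 1), (B h j) ^ 2 * ∫ ω, (Y ω) ^ 2 ∂μ) := by
    rw [integral_add (hG1.const_mul _) ((hG2.const_mul _).const_mul _),
      integral_const_mul, integral_const_mul, integral_const_mul]
    congr 1
    · congr 1
      rw [integral_finset_sum _ fun j _ => (hEjs t j).integrable_sq]
      exact Finset.sum_congr rfl fun j _ => hEsq_shift j
    · congr 2
      rw [integral_finset_sum _ fun j _ => integrable_finset_sum _ fun h _ =>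
        ((hYs (t - h.1)).integrable_sq).const_mul _]
      refine Finset.sum_congr rfl fun j _ => ?_
      rw [integral_finset_sum _ fun h _ => ((hYs (t - h.1)).integrable_sq).const_mul _]
      refine Finset.sum_congr rfl fun h _ => ?_
      rw [integral_const_mul, hYsq_shift]
  have hfinal : (1 + ε⁻¹) * (((k₂ : ℝ) + 1) *
        ∑ j, ∑ h : Fin (k₂ + 1), (B h j) ^ 2 * ∫ ω, (Y ω) ^ 2 ∂μ)
      ≤ (1 + ε⁻¹) * (((k₂ : ℝ) + 1) * (∑ h, ∑ j, (B h j) ^ 2) * (C * ∑ i, (w i) ^ 2)) := by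
    have h1 : (0 : ℝ) ≤ 1 + ε⁻¹ := by positivity
    have h2 : (0 : ℝ) ≤ (k₂ : ℝ) + 1 := by positivity
    have hsum : (∑ j, ∑ h : Fin (k₂ + 1), (B h j) ^ 2 * ∫ ω, (Y ω) ^ 2 ∂μ)
        = (∑ h, ∑ j, (B h j) ^ 2) * ∫ ω, (Y ω) ^ 2 ∂μ := by
      rw [Finset.sum_comm, Finset.sum_mul]
      exact Finset.sum_congr rfl fun h _ => by rw [Finset.sum_mul]
    rw [hsum]
    have hB2 : (0 : ℝ) ≤ ∑ h, ∑ j, (B h j) ^ 2 :=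
      Finset.sum_nonneg fun h _ => Finset.sum_nonneg fun j _ => sq_nonneg _
    have hstep := mul_le_mul_of_nonneg_left hYquad hB2
    calc (1 + ε⁻¹) * (((k₂ : ℝ) + 1) * ((∑ h, ∑ j, (B h j) ^ 2) * ∫ ω, (Y ω) ^ 2 ∂μ))
        ≤ (1 + ε⁻¹) * (((k₂ : ℝ) + 1) * ((∑ h, ∑ j, (B h j) ^ 2) * (C * ∑ i, (w i) ^ 2))) :=
          mul_le_mul_of_nonneg_left (mul_le_mul_of_nonneg_left hstep h2) h1
      _ = (1 + ε⁻¹) * (((k₂ : ℝ) + 1) * (∑ h, ∑ j, (B h j) ^ 2) * (C * ∑ i, (w i) ^ 2)) := by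
          ring
  calc MSE₀ k₁ k₂ m μ z astar Bstar ≤ MSE₀ k₁ k₂ m μ z a Bc := hmin
    _ ≤ _ := hbound
    _ = _ := hrhs
    _ ≤ _ := by
        have := hfinal
        linarith

end ModelMain

section SeBound

variable {Ω' : Type*} [MeasurableSpace Ω']

lemma Sige_diag (m : ℕ) (μ : Measure Ω') (E : Ω' → EuclideanSpace ℝ (Fin m)) (j : Fin m) :
    (Sige m μ E) j j = ∫ ω, (E ω j) ^ 2 ∂μ := by
  show (∫ ω, E ω j * E ω j ∂μ) = _
  refine integral_congr_ae (Filter.Eventually.of_forall fun ω => ?_)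
  simp [sq]

lemma se_bound (m : ℕ) (μ : Measure Ω') (E : Ω' → EuclideanSpace ℝ (Fin m)) (C : ℝ)
    (hC : lambdaMax (Sige m μ E) ≤ C) :
    (∑ j, ∫ ω, (E ω j) ^ 2 ∂μ) ≤ (m : ℝ) * C := by
  have hj : ∀ j : Fin m, (∫ ω, (E ω j) ^ 2 ∂μ) ≤ C := by
    intro j
    have hq := quad_le_lambdaMax (Sige m μ E) (fun i => if i = j then 1 else 0)
    have hL : (∑ i, ∑ i', (if i = j then (1 : ℝ) else 0) * (Sige m μ E) i i'
          * (if i' = j then (1 : ℝ) else 0)) = (Sige m μ E) j j := by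
      simp [ite_mul, mul_ite, Finset.sum_ite_eq' Finset.univ j]
    have hR : (∑ i, (if i = j then (1 : ℝ) else 0) ^ 2) = 1 := by
      simp [ite_pow, Finset.sum_ite_eq' Finset.univ j]
    rw [hL, hR, mul_one] at hq
    rw [← Sige_diag m μ E j]
    exact hq.trans hC
  calc (∑ j, ∫ ω, (E ω j) ^ 2 ∂μ) ≤ ∑ _j : Fin m, C := Finset.sum_le_sum fun j _ => hj j
    _ = (m : ℝ) * C := by simp [Finset.sum_const, Finset.card_univ, nsmul_eq_mul]

lemma C_nonneg (m : ℕ) (hm : 1 ≤ m) (μ : Measure Ω') (E : Ω' → EuclideanSpace ℝ (Fin m))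
    (C : ℝ) (hC : lambdaMax (Sige m μ E) ≤ C) : 0 ≤ C := by
  have j : Fin m := ⟨0, hm⟩
  have hq := quad_le_lambdaMax (Sige m μ E) (fun i => if i = j then 1 else 0)
  have hL : (∑ i, ∑ i', (if i = j then (1 : ℝ) else 0) * (Sige m μ E) i i'
        * (if i' = j then (1 : ℝ) else 0)) = (Sige m μ E) j j := by
    simp [ite_mul, mul_ite, Finset.sum_ite_eq' Finset.univ j]
  have hR : (∑ i, (if i = j then (1 : ℝ) else 0) ^ 2) = 1 := by
    simp [ite_pow, Finset.sum_ite_eq' Finset.univ j]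
  rw [hL, hR, mul_one] at hq
  have h0 : 0 ≤ (Sige m μ E) j j := by
    rw [Sige_diag]
    exact integral_nonneg fun ω => sq_nonneg _
  linarith [hq.trans hC]

end SeBound

lemma w_exists (k₂ m : ℕ) (hm : 1 ≤ m) (B : Matrix (Fin (k₂ + 1)) (Fin m) ℝ)
    (hd : 1 / 2 ≤ ((m : ℝ)⁻¹ • (B * Bᵀ)).det)
    (hadj : (((m : ℝ)⁻¹ • (B * Bᵀ)).adjugate) 0 0 ≤ 2)
    (htr : (∑ h, ((m : ℝ)⁻¹ • (B * Bᵀ)) h h) ≤ (k₂ : ℝ) + 2) :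
    ∃ w : Fin m → ℝ, B.mulVec w = (fun h => if h = (0 : Fin (k₂ + 1)) then 1 else 0) ∧
      (∑ i, w i ^ 2) ≤ 4 / m ∧ (∑ h, ∑ j, (B h j) ^ 2) ≤ ((k₂ : ℝ) + 2) * m := by
  have hm0 : (0 : ℝ) < m := by exact_mod_cast hm
  set G : Matrix (Fin (k₂ + 1)) (Fin (k₂ + 1)) ℝ := B * Bᵀ with hG
  set Gh : Matrix (Fin (k₂ + 1)) (Fin (k₂ + 1)) ℝ := (m : ℝ)⁻¹ • G with hGh
  set d : ℝ := Gh.det with hdd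
  have hd0 : (0 : ℝ) < d := lt_of_lt_of_le (by norm_num) hd
  set e0 : Fin (k₂ + 1) → ℝ := fun h => if h = 0 then 1 else 0 with he0
  set u : Fin (k₂ + 1) → ℝ := ((m : ℝ) * d)⁻¹ • (Gh.adjugate.mulVec e0) with hu
  set w : Fin m → ℝ := Bᵀ.mulVec u with hwdef
  have hGm : G = (m : ℝ) • Gh := by
    rw [hGh, smul_smul, mul_inv_cancel₀ (ne_of_gt hm0), one_smul]
  have hBw : B.mulVec w = e0 := by
    rw [hwdef, Matrix.mulVec_mulVec, ← hG, hGm, hu]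
    rw [Matrix.mulVec_smul, Matrix.smul_mulVec, Matrix.mulVec_mulVec,
      Matrix.mul_adjugate, Matrix.smul_mulVec, Matrix.one_mulVec, ← hdd]
    rw [smul_smul, smul_smul]
    rw [show ((m : ℝ) * d)⁻¹ * (m : ℝ) * d = 1 by field_simp]
    exact one_smul _ _
  refine ⟨w, hBw, ?_, ?_⟩
  · have hww : (∑ i, w i ^ 2) = w ⬝ᵥ w := by
      simp [dotProduct, sq]
    have h1 : w ⬝ᵥ w = e0 ⬝ᵥ u := by
      conv_lhs => rw [hwdef]
      rw [dotProduct_mulVec, Matrix.vecMul_transpose, hBw]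
    have h2 : e0 ⬝ᵥ u = u 0 := by
      simp [dotProduct, he0, ite_mul]
    have h3 : u 0 = ((m : ℝ) * d)⁻¹ * Gh.adjugate 0 0 := by
      rw [hu]
      simp only [Pi.smul_apply, smul_eq_mul]
      congr 1
      simp [Matrix.mulVec, dotProduct, he0, mul_ite]
    have hS0 : 0 ≤ ∑ i, w i ^ 2 := Finset.sum_nonneg fun i _ => sq_nonneg _
    have hSeq : (∑ i, w i ^ 2) = ((m : ℝ) * d)⁻¹ * Gh.adjugate 0 0 := by
      rw [hww, h1, h2, h3]
    rw [le_div_iff₀ hm0]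
    have hmd : (0 : ℝ) < (m : ℝ) * d := by positivity
    have hkey : (∑ i, w i ^ 2) * ((m : ℝ) * d) = Gh.adjugate 0 0 := by
      rw [hSeq]
      field_simp
    nlinarith [mul_nonneg hS0 hm0.le, hkey, hadj, hd]
  · have hGdiag : ∀ h, (∑ j, (B h j) ^ 2) = G h h := by
      intro h
      rw [hG]
      simp [Matrix.mul_apply, Matrix.transpose_apply, sq]
    have hGGh : ∀ h, G h h = (m : ℝ) * Gh h h := by
      intro h
      rw [hGh]
      simp only [Matrix.smul_apply, smul_eq_mul]
      rw [← mul_assoc, mul_inv_cancel₀ (ne_of_gt hm0), one_mul]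
    calc (∑ h, ∑ j, (B h j) ^ 2) = ∑ h, G h h := Finset.sum_congr rfl fun h _ => hGdiag h
      _ = (m : ℝ) * ∑ h, Gh h h := by
          rw [Finset.mul_sum]
          exact Finset.sum_congr rfl fun h _ => hGGh h
      _ ≤ (m : ℝ) * ((k₂ : ℝ) + 2) := mul_le_mul_of_nonneg_left htr hm0.le
      _ = ((k₂ : ℝ) + 2) * m := by ring

theorem stmt3
    (Ω : ℕ → Type*) [∀ m, MeasurableSpace (Ω m)]
    (μ : ∀ m, Measure (Ω m)) [∀ m, IsProbabilityMeasure (μ m)]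
    (τ : ∀ m, Ω m → Ω m) (hτ : ∀ m, MeasurePreserving (τ m) (μ m) (μ m))
    (F : ∀ m, Ω m → ℝ) (hF : ∀ m, MemLp (F m) 2 (μ m))
    (hFmean : ∀ m, ∫ ω, F m ω ∂(μ m) = 0)
    (B : ∀ m, Matrix (Fin (k₂ + 1)) (Fin m) ℝ)
    (E : ∀ m, Ω m → EuclideanSpace ℝ (Fin m)) (hE : ∀ m, MemLp (E m) 2 (μ m))
    (hEmean : ∀ m, ∫ ω, E m ω ∂(μ m) = 0)
    (hcond1 : ∀ m, Condition1 k₁ k₂ m (μ m) (zdfm k₂ m (τ m) (F m) (B m) (E m)))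
    (h2a : Tendsto (fun m : ℕ => (m : ℝ)⁻¹ • (B m * (B m)ᵀ)) atTop
      (nhds (1 : Matrix (Fin (k₂ + 1)) (Fin (k₂ + 1)) ℝ)))
    (h2b : ∃ C : ℝ, ∀ m, lambdaMax (Sige m (μ m) (E m)) ≤ C)
    (h2c : ∀ m (s t : ℕ) (j : Fin m),
      ∫ ω, E m ((τ m)^[s] ω) j * F m ((τ m)^[t] ω) ∂(μ m) = 0)
    (astar : ∀ m, EuclideanSpace ℝ (Fin (k₁ + 1) × Fin m))
    (Bstar : ∀ m, Matrix (Fin (k₂ + 1)) (Fin m) ℝ)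
    (hstar : ∀ m, (astar m, Bstar m) ∈
      minimizers k₁ k₂ m (μ m) (zdfm k₂ m (τ m) (F m) (B m) (E m))) :
    limsup (fun m : ℕ =>
      (m : ℝ)⁻¹ * MSE₀ k₁ k₂ m (μ m) (zdfm k₂ m (τ m) (F m) (B m) (E m))
          (astar m) (Bstar m)
        - (m : ℝ)⁻¹ * ∑ j : Fin m, ∫ ω, (E m ω j) ^ 2 ∂(μ m)) atTop ≤ 0 := by
  classical
  obtain ⟨C₀, hC₀⟩ := h2b
  set C : ℝ := max C₀ 0 with hCdef
  have hC : ∀ m, lambdaMax (Sige m (μ m) (E m)) ≤ C := fun m => (hC₀ m).trans (le_max_left _ _)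
  have hCnn : (0 : ℝ) ≤ C := le_max_right _ _
  set u : ℕ → ℝ := fun m : ℕ =>
      (m : ℝ)⁻¹ * MSE₀ k₁ k₂ m (μ m) (zdfm k₂ m (τ m) (F m) (B m) (E m))
          (astar m) (Bstar m)
        - (m : ℝ)⁻¹ * ∑ j : Fin m, ∫ ω, (E m ω j) ^ 2 ∂(μ m) with hudef
  -- convergence of determinant / adjugate / trace of the normalized Gram matrix
  have hdet : Tendsto (fun m : ℕ => ((m : ℝ)⁻¹ • (B m * (B m)ᵀ)).det) atTop (nhds 1) := by
    have hcont : Continuous fun M : Matrix (Fin (k₂ + 1)) (Fin (k₂ + 1)) ℝ => M.det :=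
      continuous_id.matrix_det
    have := (hcont.tendsto (1 : Matrix (Fin (k₂ + 1)) (Fin (k₂ + 1)) ℝ)).comp h2a
    rw [Matrix.det_one] at this
    exact this
  have hadjt : Tendsto (fun m : ℕ => ((m : ℝ)⁻¹ • (B m * (B m)ᵀ)).adjugate 0 0)
      atTop (nhds 1) := by
    have hcont : Continuous fun M : Matrix (Fin (k₂ + 1)) (Fin (k₂ + 1)) ℝ =>
        M.adjugate 0 0 := (continuous_id.matrix_adjugate).matrix_elem 0 0
    have := (hcont.tendsto (1 : Matrix (Fin (k₂ + 1)) (Fin (k₂ + 1)) ℝ)).comp h2a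
    rw [Matrix.adjugate_one, Matrix.one_apply_eq] at this
    exact this
  have htrt : Tendsto (fun m : ℕ => ∑ h : Fin (k₂ + 1), ((m : ℝ)⁻¹ • (B m * (B m)ᵀ)) h h)
      atTop (nhds ((k₂ : ℝ) + 1)) := by
    have hcont : Continuous fun M : Matrix (Fin (k₂ + 1)) (Fin (k₂ + 1)) ℝ => ∑ h, M h h :=
      continuous_finset_sum _ fun h _ => continuous_id.matrix_elem h h
    have := (hcont.tendsto (1 : Matrix (Fin (k₂ + 1)) (Fin (k₂ + 1)) ℝ)).comp h2a
    have h1 : (∑ h : Fin (k₂ + 1), (1 : Matrix (Fin (k₂ + 1)) (Fin (k₂ + 1)) ℝ) h h)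
        = (k₂ : ℝ) + 1 := by
      simp [Matrix.one_apply_eq, Finset.card_univ]
    rw [← h1]
    exact this
  have hEv : ∀ᶠ m : ℕ in atTop, 1 ≤ m ∧
      1 / 2 ≤ ((m : ℝ)⁻¹ • (B m * (B m)ᵀ)).det ∧
      ((m : ℝ)⁻¹ • (B m * (B m)ᵀ)).adjugate 0 0 ≤ 2 ∧
      (∑ h : Fin (k₂ + 1), ((m : ℝ)⁻¹ • (B m * (B m)ᵀ)) h h) ≤ (k₂ : ℝ) + 2 := by
    filter_upwards [eventually_ge_atTop 1,
      hdet.eventually (eventually_ge_nhds (by norm_num : (1 / 2 : ℝ) < 1)),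
      hadjt.eventually (eventually_le_nhds (by norm_num : (1 : ℝ) < 2)),
      htrt.eventually (eventually_le_nhds (by linarith : (k₂ : ℝ) + 1 < (k₂ : ℝ) + 2))]
      with m h1 h2 h3 h4
    exact ⟨h1, h2, h3, h4⟩
  -- the key eventual bound for each ε > 0
  have hkey : ∀ ε : ℝ, 0 < ε → ∀ᶠ m : ℕ in atTop,
      u m ≤ ε * C + ((1 + ε⁻¹) * (((k₂ : ℝ) + 1) * (((k₂ : ℝ) + 2) * (4 * C)))) / m := by
    intro ε hε
    filter_upwards [hEv] with m hm
    obtain ⟨hm1, hd, hadj, htr⟩ := hm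
    have hm0 : (0 : ℝ) < m := by exact_mod_cast hm1
    obtain ⟨w, hw1, hw2, hw3⟩ := w_exists k₂ m hm1 (B m) hd hadj htr
    have hmb := model_bound k₁ k₂ m (μ m) (τ m) (hτ m) (F m) (B m) (E m) (hE m)
      C (hC m) w hw1 (astar m) (Bstar m) (hstar m) ε hε
    set Se : ℝ := ∑ j : Fin m, ∫ ω, (E m ω j) ^ 2 ∂(μ m) with hSedef
    set T : ℝ := ∑ h, ∑ j, (B m h j) ^ 2 with hTdef
    set S : ℝ := ∑ i, w i ^ 2 with hSdef
    have hSe_le : Se ≤ (m : ℝ) * C := se_bound m (μ m) (E m) C (hC m)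
    have hSe0 : (0 : ℝ) ≤ Se :=
      Finset.sum_nonneg fun j _ => integral_nonneg fun ω => sq_nonneg _
    have hT0 : (0 : ℝ) ≤ T :=
      Finset.sum_nonneg fun h _ => Finset.sum_nonneg fun j _ => sq_nonneg _
    have hS0 : (0 : ℝ) ≤ S := Finset.sum_nonneg fun i _ => sq_nonneg _
    have hinv0 : (0 : ℝ) ≤ (m : ℝ)⁻¹ := inv_nonneg.2 hm0.le
    have h1 : u m ≤ ε * ((m : ℝ)⁻¹ * Se)
        + (m : ℝ)⁻¹ * ((1 + ε⁻¹) * (((k₂ : ℝ) + 1) * T * (C * S))) := by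
      have hmul := mul_le_mul_of_nonneg_left hmb hinv0
      have hexp : (m : ℝ)⁻¹ * ((1 + ε) * Se
            + (1 + ε⁻¹) * (((k₂ : ℝ) + 1) * T * (C * S)))
          = (m : ℝ)⁻¹ * Se + (ε * ((m : ℝ)⁻¹ * Se)
            + (m : ℝ)⁻¹ * ((1 + ε⁻¹) * (((k₂ : ℝ) + 1) * T * (C * S)))) := by ring
      rw [hudef]
      simp only
      rw [← hSedef]
      linarith [hexp ▸ hmul]
    have h2 : ε * ((m : ℝ)⁻¹ * Se) ≤ ε * C := by
      have hh : (m : ℝ)⁻¹ * Se ≤ (m : ℝ)⁻¹ * ((m : ℝ) * C) :=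
        mul_le_mul_of_nonneg_left hSe_le hinv0
      rw [← mul_assoc, inv_mul_cancel₀ (ne_of_gt hm0), one_mul] at hh
      exact mul_le_mul_of_nonneg_left hh hε.le
    have h3 : (m : ℝ)⁻¹ * ((1 + ε⁻¹) * (((k₂ : ℝ) + 1) * T * (C * S)))
        ≤ ((1 + ε⁻¹) * (((k₂ : ℝ) + 1) * (((k₂ : ℝ) + 2) * (4 * C)))) / m := by
      have hCS : C * S ≤ C * (4 / m) := mul_le_mul_of_nonneg_left hw2 hCnn
      have hTS : T * (C * S) ≤ (((k₂ : ℝ) + 2) * m) * (C * (4 / m)) :=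
        mul_le_mul hw3 hCS (mul_nonneg hCnn hS0) (by positivity)
      have hk1 : (0 : ℝ) ≤ (k₂ : ℝ) + 1 := by positivity
      have he1 : (0 : ℝ) ≤ 1 + ε⁻¹ := by positivity
      have hchain : (m : ℝ)⁻¹ * ((1 + ε⁻¹) * (((k₂ : ℝ) + 1) * T * (C * S)))
          ≤ (m : ℝ)⁻¹ * ((1 + ε⁻¹) * (((k₂ : ℝ) + 1) * ((((k₂ : ℝ) + 2) * m) * (C * (4 / m))))) := by
        refine mul_le_mul_of_nonneg_left (mul_le_mul_of_nonneg_left ?_ he1) hinv0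
        rw [mul_assoc]
        exact mul_le_mul_of_nonneg_left hTS hk1
      refine hchain.trans (le_of_eq ?_)
      field_simp
    linarith
  -- coboundedness
  have hcb : IsCoboundedUnder (· ≤ ·) atTop u := by
    refine isCoboundedUnder_le_of_eventually_le atTop (x := -C) ?_
    filter_upwards [hEv] with m hm
    obtain ⟨hm1, -, -, -⟩ := hm
    have hm0 : (0 : ℝ) < m := by exact_mod_cast hm1
    have hMSE0 : (0 : ℝ) ≤ MSE₀ k₁ k₂ m (μ m) (zdfm k₂ m (τ m) (F m) (B m) (E m))
        (astar m) (Bstar m) := integral_nonneg fun ω => by positivity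
    have hSe_le : (∑ j : Fin m, ∫ ω, (E m ω j) ^ 2 ∂(μ m)) ≤ (m : ℝ) * C :=
      se_bound m (μ m) (E m) C (hC m)
    have hinv0 : (0 : ℝ) ≤ (m : ℝ)⁻¹ := inv_nonneg.2 hm0.le
    have hh : (m : ℝ)⁻¹ * (∑ j : Fin m, ∫ ω, (E m ω j) ^ 2 ∂(μ m))
        ≤ (m : ℝ)⁻¹ * ((m : ℝ) * C) := by
      refine mul_le_mul_of_nonneg_left hSe_le hinv0
    rw [← mul_assoc, inv_mul_cancel₀ (ne_of_gt hm0), one_mul] at hh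
    rw [hudef]
    simp only
    have := mul_nonneg hinv0 hMSE0
    linarith
  -- conclude
  have hlim : ∀ δ : ℝ, 0 < δ → limsup u atTop ≤ δ := by
    intro δ hδ
    set ε : ℝ := δ / (2 * (C + 1)) with hεdef
    have hε : 0 < ε := by positivity
    have hεC : ε * C ≤ δ / 2 := by
      rw [hεdef]
      rw [div_mul_eq_mul_div, div_le_div_iff₀ (by positivity) (by norm_num)]
      nlinarith
    set K : ℝ := (1 + ε⁻¹) * (((k₂ : ℝ) + 1) * (((k₂ : ℝ) + 2) * (4 * C))) with hKdef
    have hKm : ∀ᶠ m : ℕ in atTop, K / m ≤ δ / 2 :=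
      (tendsto_const_div_atTop_nhds_zero_nat K).eventually
        (eventually_le_nhds (by positivity))
    have hev : ∀ᶠ m : ℕ in atTop, u m ≤ δ := by
      filter_upwards [hkey ε hε, hKm] with m ha hb
      calc u m ≤ ε * C + K / m := ha
        _ ≤ δ / 2 + δ / 2 := add_le_add hεC hb
        _ = δ := by ring
    exact limsup_le_of_le hcb hev
  refine le_of_forall_gt_imp_ge_of_dense fun δ hδ => hlim δ hδ


end ODPCDFM
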